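/- Let $X$ be a Banach manifold, $Y$ a Hilbert manifold, $V$ a Hilbert space, $A \subseteq X \times Y$ open, and $f : A \to V$ a $C^1$ map. Suppose that at every zero $(x_0, y_0)$ of $f$, the partial derivative $\partial f / \partial y (x_0, y_0) : T_{y_0} Y \to V$ is a Fredholm operator. Then $0$ is a regular value of $f$ if and only if at every zero $(x_0,y_0)$ of $f$ one has $(\operatorname{Im} \partial f/\partial x(x_0,y_0))^{\perp} \cap (\operatorname{Im} \partial f/\partial y(x_0,y_0))^{\perp} = \{0\}$ in $V$. -/

import Mathlib

set_option synthInstance.maxHeartbeats 400000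

set_option maxHeartbeats 1000000 in
theorem stmt_14 {X Y V : Type*}
    [NormedAddCommGroup X] [NormedSpace ℝ X] [CompleteSpace X]
    [NormedAddCommGroup Y] [InnerProductSpace ℝ Y] [CompleteSpace Y]
    [NormedAddCommGroup V] [InnerProductSpace ℝ V] [CompleteSpace V]
    (A : Set (X × Y)) (hA : IsOpen A) (f : X × Y → V)
    (hf : ContDiffOn ℝ 1 f A)
    (hFred : ∀ p ∈ A, f p = 0 →
      FiniteDimensional ℝ
          (LinearMap.ker (((fderiv ℝ f p).comp (ContinuousLinearMap.inr ℝ X Y) : Y →L[ℝ] V) : Y →ₗ[ℝ] V)) ∧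
        FiniteDimensional ℝ
          (V ⧸ LinearMap.range (((fderiv ℝ f p).comp (ContinuousLinearMap.inr ℝ X Y) : Y →L[ℝ] V) : Y →ₗ[ℝ] V))) :
    (∀ p ∈ A, f p = 0 →
        Function.Surjective (fderiv ℝ f p) ∧
          (LinearMap.ker ((fderiv ℝ f p : X × Y →L[ℝ] V) : X × Y →ₗ[ℝ] V)).ClosedComplemented) ↔
      (∀ p ∈ A, f p = 0 →
        (LinearMap.range (((fderiv ℝ f p).comp (ContinuousLinearMap.inl ℝ X Y) : X →L[ℝ] V) : X →ₗ[ℝ] V))ᗮ ⊓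
            (LinearMap.range (((fderiv ℝ f p).comp (ContinuousLinearMap.inr ℝ X Y) : Y →L[ℝ] V) : Y →ₗ[ℝ] V))ᗮ =
          ⊥) := by
  constructor
  · -- forward direction: surjectivity gives the orthogonality condition
    intro h p hp hfp
    obtain ⟨hsurj, -⟩ := h p hp hfp
    set D := fderiv ℝ f p with hDdef
    set Dx := D.comp (ContinuousLinearMap.inl ℝ X Y) with hDxdef
    set Dy := D.comp (ContinuousLinearMap.inr ℝ X Y) with hDydef
    have hD : ∀ (x : X) (y : Y), D (x, y) = Dx x + Dy y := by
      intro x y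
      have hxy : ((x, y) : X × Y) = ((x, 0) : X × Y) + ((0, y) : X × Y) := by simp
      rw [hxy, map_add]
      rfl
    have hrange : LinearMap.range (D : X × Y →ₗ[ℝ] V) = LinearMap.range (Dx : X →ₗ[ℝ] V) ⊔ LinearMap.range (Dy : Y →ₗ[ℝ] V) := by
      apply le_antisymm
      · rintro v ⟨⟨x, y⟩, rfl⟩
        show D (x, y) ∈ _
        rw [hD]
        exact Submodule.add_mem_sup (LinearMap.mem_range_self _ x) (LinearMap.mem_range_self _ y)
      · apply sup_le
        · rintro v ⟨x, rfl⟩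
          exact ⟨_, rfl⟩
        · rintro v ⟨y, rfl⟩
          exact ⟨_, rfl⟩
    rw [Submodule.inf_orthogonal, ← hrange, LinearMap.range_eq_top.mpr hsurj,
      Submodule.top_orthogonal_eq_bot]
  · -- backward direction
    intro h p hp hfp
    obtain ⟨hKfd, hQfd⟩ := hFred p hp hfp
    have hT := h p hp hfp
    set D := fderiv ℝ f p with hDdef
    set Dx := D.comp (ContinuousLinearMap.inl ℝ X Y) with hDxdef
    set Dy := D.comp (ContinuousLinearMap.inr ℝ X Y) with hDydef
    have hD : ∀ (x : X) (y : Y), D (x, y) = Dx x + Dy y := by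
      intro x y
      have hxy : ((x, y) : X × Y) = ((x, 0) : X × Y) + ((0, y) : X × Y) := by simp
      rw [hxy, map_add]
      rfl
    have hrange : LinearMap.range (D : X × Y →ₗ[ℝ] V) = LinearMap.range (Dx : X →ₗ[ℝ] V) ⊔ LinearMap.range (Dy : Y →ₗ[ℝ] V) := by
      apply le_antisymm
      · rintro v ⟨⟨x, y⟩, rfl⟩
        show D (x, y) ∈ _
        rw [hD]
        exact Submodule.add_mem_sup (LinearMap.mem_range_self _ x) (LinearMap.mem_range_self _ y)
      · apply sup_le
        · rintro v ⟨x, rfl⟩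
          exact ⟨_, rfl⟩
        · rintro v ⟨y, rfl⟩
          exact ⟨_, rfl⟩
    -- density of range D
    have hdense : (LinearMap.range (D : X × Y →ₗ[ℝ] V)).topologicalClosure = ⊤ := by
      have ho : (LinearMap.range (D : X × Y →ₗ[ℝ] V))ᗮ = ⊥ := by
        rw [hrange, ← Submodule.inf_orthogonal]
        exact hT
      have h2 := congrArg Submodule.orthogonal ho
      rwa [Submodule.orthogonal_orthogonal_eq_closure, Submodule.bot_orthogonal_eq_top] at h2
    -- the kernel K of Dy, finite-dimensional
    set K := LinearMap.ker (Dy : Y →ₗ[ℝ] V) with hKdef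
    haveI : FiniteDimensional ℝ K := hKfd
    set Y₁ := Kᗮ with hY₁def
    haveI : CompleteSpace Y₁ := K.isClosed_orthogonal.completeSpace_coe
    set φ := Dy.comp Y₁.subtypeL with hφdef
    have hφapp : ∀ z : Y₁, φ z = Dy (z : Y) := fun z => rfl
    have hφinj : LinearMap.ker (φ : Y₁ →ₗ[ℝ] V) = ⊥ := by
      rw [LinearMap.ker_eq_bot']
      rintro ⟨y, hy⟩ h0
      have hyK : y ∈ K := h0
      exact Subtype.ext (Submodule.disjoint_def.mp K.orthogonal_disjoint y hyK hy)
    have hφrange : LinearMap.range (φ : Y₁ →ₗ[ℝ] V) = LinearMap.range (Dy : Y →ₗ[ℝ] V) := by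
      apply le_antisymm
      · rintro v ⟨z, rfl⟩
        exact ⟨(z : Y), rfl⟩
      · rintro v ⟨y, rfl⟩
        refine ⟨⟨y - (K.orthogonalProjectionOnto y : Y), Submodule.sub_starProjection_mem_orthogonal (K := K) y⟩, ?_⟩
        have hmem : ((K.orthogonalProjectionOnto y : Y)) ∈ K := (K.orthogonalProjectionOnto y).2
        have h0 : Dy ((K.orthogonalProjectionOnto y : Y)) = 0 := LinearMap.mem_ker.mp hmem
        show φ _ = Dy y
        rw [hφapp]
        simp only [map_sub, h0, sub_zero]
    -- range Dy is closed
    obtain ⟨Cq, hCq⟩ := Submodule.exists_isCompl (LinearMap.range (φ : Y₁ →ₗ[ℝ] V))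
    haveI hCqfd : FiniteDimensional ℝ Cq := by
      have hCq' : IsCompl (LinearMap.range (Dy : Y →ₗ[ℝ] V)) Cq := hφrange ▸ hCq
      exact ((LinearMap.range (Dy : Y →ₗ[ℝ] V)).quotientEquivOfIsCompl Cq hCq').finiteDimensional
    have hclosed : IsClosed ((LinearMap.range (Dy : Y →ₗ[ℝ] V) : Submodule ℝ V) : Set V) := by
      rw [← hφrange]
      exact φ.closed_complemented_range_of_isCompl_of_ker_eq_bot Cq hCq
        Cq.closed_of_finiteDimensional hφinj
    set R := LinearMap.range (Dy : Y →ₗ[ℝ] V) with hRdef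
    haveI : CompleteSpace R := hclosed.completeSpace_coe
    set C := Rᗮ with hCdef
    haveI hCfd : FiniteDimensional ℝ C :=
      (R.quotientEquivOfIsCompl Rᗮ R.isCompl_orthogonal_of_hasOrthogonalProjection).finiteDimensional
    have hCperp : Cᗮ = R := R.orthogonal_orthogonal
    set Q := C.orthogonalProjectionOnto with hQdef
    have hQzero : ∀ v ∈ R, Q v = 0 := fun v hv =>
      Submodule.orthogonalProjectionOnto_eq_zero_iff.mpr (hCperp ▸ hv)
    -- surjectivity of Q ∘ D
    have hQD_surj : Function.Surjective (⇑Q ∘ ⇑D) := by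
      have hdenseD : DenseRange (⇑D) := by
        have h1 : closure (Set.range ⇑D) = Set.univ := by
          have := congrArg (fun (s : Submodule ℝ V) => (s : Set V)) hdense
          simpa [Submodule.topologicalClosure_coe, LinearMap.coe_range, ContinuousLinearMap.coe_coe] using this
        rw [DenseRange, dense_iff_closure_eq, h1]
      have hQsurj : Function.Surjective ⇑Q := fun c =>
        ⟨(c : V), Submodule.orthogonalProjectionOnto_mem_subspace_eq_self c⟩
      have hdr : DenseRange (⇑Q ∘ ⇑D) := hQsurj.denseRange.comp hdenseD Q.continuous
      have hr : Set.range (⇑Q ∘ ⇑D) = ((LinearMap.range (Q.comp D : X × Y →ₗ[ℝ] C) : Submodule ℝ C) : Set C) := by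
        ext c
        simp only [Set.mem_range, SetLike.mem_coe, LinearMap.mem_range,
          ContinuousLinearMap.coe_comp', Function.comp_apply, ContinuousLinearMap.coe_coe]
      have hcl : IsClosed (Set.range (⇑Q ∘ ⇑D)) := by
        rw [hr]
        exact (LinearMap.range (Q.comp D : X × Y →ₗ[ℝ] C)).closed_of_finiteDimensional
      have : Set.range (⇑Q ∘ ⇑D) = Set.univ := by
        rw [← hcl.closure_eq]
        exact hdr.closure_range
      exact Set.range_eq_univ.mp this
    have hDsurj : Function.Surjective ⇑D := by
      intro v
      obtain ⟨z, hz⟩ := hQD_surj (Q v)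
      have hzz : Q (D z) = Q v := hz
      have hmem : v - D z ∈ R := by
        rw [← hCperp]
        rw [← Submodule.orthogonalProjectionOnto_eq_zero_iff (K := C)]
        rw [map_sub, hzz, sub_self]
      obtain ⟨y, hy⟩ := hmem
      refine ⟨z + (0, y), ?_⟩
      have : D (0, y) = Dy y := by rw [hD]; simp
      rw [map_add, this, show Dy y = v - D z from hy]
      abel
    refine ⟨hDsurj, ?_⟩
    -- closed complementedness of ker D
    set g := Q.comp Dx with hgdef
    haveI : FiniteDimensional ℝ (LinearMap.range (g : X →ₗ[ℝ] C)) :=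
      FiniteDimensional.finiteDimensional_submodule _
    obtain ⟨πg, hπg⟩ := g.ker_closedComplemented_of_finiteDimensional_range
    set pX : X →L[ℝ] X := (LinearMap.ker (g : X →ₗ[ℝ] C)).subtypeL.comp πg with hpXdef
    have hpX_mem : ∀ x, pX x ∈ LinearMap.ker (g : X →ₗ[ℝ] C) := fun x => (πg x).2
    have hpX_id : ∀ x ∈ LinearMap.ker (g : X →ₗ[ℝ] C), pX x = x := by
      intro x hx
      have := hπg ⟨x, hx⟩
      calc pX x = ((πg x : LinearMap.ker (g : X →ₗ[ℝ] C)) : X) := rfl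
        _ = x := by rw [this]
    -- the isomorphism Y₁ ≃ R
    have hφmem : ∀ z : Y₁, φ z ∈ R := fun z => hφrange ▸ LinearMap.mem_range_self (φ : Y₁ →ₗ[ℝ] V) z
    set φ' := φ.codRestrict R hφmem with hφ'def
    have hφ'inj : LinearMap.ker (φ' : Y₁ →ₗ[ℝ] R) = ⊥ := by
      rw [ContinuousLinearMap.ker_codRestrict, hφinj]
    have hφ'surj : LinearMap.range (φ' : Y₁ →ₗ[ℝ] R) = ⊤ := by
      rw [Submodule.eq_top_iff']
      rintro ⟨v, hv⟩
      obtain ⟨z, hz⟩ : v ∈ LinearMap.range (φ : Y₁ →ₗ[ℝ] V) := hφrange ▸ hv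
      exact ⟨z, Subtype.ext hz⟩
    set e := ContinuousLinearEquiv.ofBijective φ' hφ'inj hφ'surj with hedef
    have he_app : ∀ z : Y₁, ((e z : R) : V) = φ z := fun z => rfl
    set PR := R.orthogonalProjectionOnto with hPRdef
    set S : V →L[ℝ] Y := Y₁.subtypeL.comp ((e.symm : R →L[ℝ] Y₁).comp PR) with hSdef
    have hS_mem : ∀ v, S v ∈ Y₁ := fun v => (e.symm (PR v)).2
    have hS_Dy : ∀ v, Dy (S v) = ((PR v : R) : V) := by
      intro v
      have h1 : Dy (S v) = φ (e.symm (PR v)) := rfl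
      rw [h1, ← he_app, e.apply_symm_apply]
    set πK : Y →L[ℝ] Y := K.subtypeL.comp (K.orthogonalProjectionOnto) with hπKdef
    have hπK_mem : ∀ y, πK y ∈ K := fun y => (K.orthogonalProjectionOnto y).2
    have hπK_zero : ∀ y, Dy (πK y) = 0 := fun y => LinearMap.mem_ker.mp (hπK_mem y)
    set pr : (X × Y) →L[ℝ] (X × Y) :=
      (pX.comp (ContinuousLinearMap.fst ℝ X Y)).prod
        ((πK.comp (ContinuousLinearMap.snd ℝ X Y)) -
          (S.comp (Dx.comp (pX.comp (ContinuousLinearMap.fst ℝ X Y))))) with hprdef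
    have hpr_app : ∀ x y, pr (x, y) = (pX x, πK y - S (Dx (pX x))) := fun x y => rfl
    -- pr maps into ker D
    have hmem : ∀ z : X × Y, pr z ∈ LinearMap.ker (D : X × Y →ₗ[ℝ] V) := by
      rintro ⟨x, y⟩
      rw [hpr_app, LinearMap.mem_ker, ContinuousLinearMap.coe_coe, hD, map_sub, hπK_zero, hS_Dy, zero_sub]
      have hxk : Dx (pX x) ∈ R := by
        have h0 : Q (Dx (pX x)) = 0 := hpX_mem x
        rw [← hCperp]
        exact Submodule.orthogonalProjectionOnto_eq_zero_iff.mp h0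
      have : ((PR (Dx (pX x)) : R) : V) = Dx (pX x) :=
        Submodule.starProjection_eq_self_iff (K := R) |>.mpr hxk
      rw [this]
      abel
    -- pr is the identity on ker D
    have hid : ∀ z ∈ LinearMap.ker (D : X × Y →ₗ[ℝ] V), pr z = z := by
      rintro ⟨x, y⟩ hz
      have hz0 : Dx x + Dy y = 0 := by rw [← hD]; exact hz
      have hDyR : Dy y ∈ R := LinearMap.mem_range_self (Dy : Y →ₗ[ℝ] V) y
      have hDxx : Dx x = -Dy y := by linear_combination (norm := module) hz0
      have hDxR : Dx x ∈ R := by rw [hDxx]; exact neg_mem hDyR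
      have hxker : x ∈ LinearMap.ker (g : X →ₗ[ℝ] C) := by
        have : Q (Dx x) = 0 := Submodule.orthogonalProjectionOnto_eq_zero_iff.mpr (hCperp ▸ hDxR)
        exact this
      have hpxx : pX x = x := hpX_id x hxker
      rw [hpr_app, hpxx]
      have hy1 : y - πK y ∈ Y₁ := Submodule.sub_starProjection_mem_orthogonal (K := K) y
      -- show S (Dx x) = -(y - πK y)
      have hSx : S (Dx x) = -(y - πK y) := by
        have hab : S (Dx x) - (-(y - πK y)) ∈ Y₁ :=
          sub_mem (hS_mem _) (neg_mem hy1)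
        have hDyab : Dy (S (Dx x) - (-(y - πK y))) = 0 := by
          rw [map_sub, hS_Dy, show ((PR (Dx x) : R) : V) = Dx x from
              Submodule.starProjection_eq_self_iff (K := R) |>.mpr hDxR, map_neg, map_sub,
            hπK_zero, hDxx]
          abel
        have := hφinj ▸ (LinearMap.mem_ker.mpr (show φ ⟨_, hab⟩ = 0 from hDyab))
        have h0 : (⟨S (Dx x) - (-(y - πK y)), hab⟩ : Y₁) = 0 := this
        have h0' : S (Dx x) - (-(y - πK y)) = 0 := congrArg Subtype.val h0
        exact sub_eq_zero.mp h0'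
      rw [hSx]
      refine Prod.ext rfl ?_
      simp only
      abel
    exact ⟨pr.codRestrict (LinearMap.ker (D : X × Y →ₗ[ℝ] V)) hmem, by
      rintro ⟨z, hz⟩
      apply Subtype.ext
      exact hid z hz⟩
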